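/- Define the s-ordering of x ∈ ℝ³ by taking x̂ = (|x₁|,|x₂|,|x₃|) sorted decreasingly and then setting the third component's sign to sgn(x₁x₂x₃), and say x ≺_s y if x₁^{↓s} ≤ y₁^{↓s}, x₁^{↓s}+x₂^{↓s}+x₃^{↓s} ≤ y₁^{↓s}+y₂^{↓s}+y₃^{↓s}, and x₁^{↓s}+x₂^{↓s}−x₃^{↓s} ≤ y₁^{↓s}+y₂^{↓s}−y₃^{↓s}. Then for any a' ∈ ℝ³ with all entries in [−π/2, π/2] and any z ∈ ℤ³ with some |zᵢ| > 1, it holds that a' + π·(0,0,0) ≺_s a' + π·z. -/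
import Mathlib


/-- The entries of `x` rearranged in decreasing order. -/
noncomputable def sortDesc {k : ℕ} (x : Fin k → ℝ) : Fin k → ℝ :=
  fun i => x (Tuple.sort x i.rev)

/-- The s-ordered version of `x ∈ ℝ³`: sort `(|x₁|,|x₂|,|x₃|)` decreasingly and give
the smallest entry the sign `sgn(x₁x₂x₃)`. -/
noncomputable def sOrder (x : Fin 3 → ℝ) : Fin 3 → ℝ := fun i =>
  if i = 2 then Real.sign (x 0 * x 1 * x 2) * sortDesc (fun j => |x j|) 2
  else sortDesc (fun j => |x j|) i

/-- s-majorization `x ≺_s y` on `ℝ³`. -/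
def SMaj (x y : Fin 3 → ℝ) : Prop :=
  sOrder x 0 ≤ sOrder y 0 ∧
  sOrder x 0 + sOrder x 1 + sOrder x 2 ≤ sOrder y 0 + sOrder y 1 + sOrder y 2 ∧
  sOrder x 0 + sOrder x 1 - sOrder x 2 ≤ sOrder y 0 + sOrder y 1 - sOrder y 2

lemma sortDesc_exists {k : ℕ} (x : Fin k → ℝ) (i : Fin k) : ∃ j, sortDesc x i = x j :=
  ⟨_, rfl⟩

lemma sortDesc_anti {k : ℕ} (x : Fin k → ℝ) : Antitone (sortDesc x) := by
  intro i j hij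
  exact Tuple.monotone_sort x (Fin.rev_le_rev.mpr hij)

lemma le_sortDesc_zero (x : Fin 3 → ℝ) (j : Fin 3) :
    x j ≤ sortDesc x 0 := by
  have h := Tuple.monotone_sort x
    (show (Tuple.sort x)⁻¹ j ≤ (2 : Fin 3) from Fin.le_last _)
  simpa [sortDesc, Fin.rev_zero] using h

lemma abs_sign_le_one (t : ℝ) : |Real.sign t| ≤ 1 := by
  rcases lt_trichotomy t 0 with h | h | h
  · simp [Real.sign_of_neg h]
  · simp [h]
  · simp [Real.sign_of_pos h]

/-- If some `|zᵢ| > 1` then `a' ≺_s a' + πz` (for `a'` with entries in `[−π/2, π/2]`). -/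
theorem stmt17 (a : Fin 3 → ℝ) (ha : ∀ i, |a i| ≤ Real.pi / 2)
    (z : Fin 3 → ℤ) (hz : ∃ i, 1 < |z i|) :
    SMaj a (fun i => a i + Real.pi * z i) := by
  obtain ⟨i0, hi0⟩ := hz
  set b : Fin 3 → ℝ := fun i => a i + Real.pi * z i with hb
  have hpi := Real.pi_pos
  -- |b i0| ≥ 3π/2
  have hz2 : (2 : ℝ) ≤ |(z i0 : ℝ)| := by
    have : (2 : ℤ) ≤ |z i0| := hi0
    calc (2:ℝ) = ((2:ℤ) : ℝ) := by norm_num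
    _ ≤ ((|z i0| : ℤ) : ℝ) := by exact_mod_cast this
    _ = |(z i0 : ℝ)| := by push_cast; ring
  have hbig : 3 * Real.pi / 2 ≤ |b i0| := by
    have h1 : |Real.pi * z i0| - |a i0| ≤ |a i0 + Real.pi * z i0| := by
      have h := abs_add_le (a i0 + Real.pi * z i0) (-(a i0))
      rw [abs_neg] at h
      have he : a i0 + Real.pi * z i0 + -(a i0) = Real.pi * z i0 := by ring
      rw [he] at h
      linarith
    have h2 : 2 * Real.pi ≤ |Real.pi * z i0| := by
      rw [abs_mul, abs_of_pos hpi]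
      nlinarith
    have h3 := ha i0
    simp only [hb]
    linarith
  -- facts about sOrder a
  have hAle : ∀ i : Fin 3, sortDesc (fun j => |a j|) i ≤ Real.pi / 2 := by
    intro i
    obtain ⟨j, hj⟩ := sortDesc_exists (fun j => |a j|) i
    rw [hj]; exact ha j
  have hAnn : ∀ i : Fin 3, 0 ≤ sortDesc (fun j => |a j|) i := by
    intro i
    obtain ⟨j, hj⟩ := sortDesc_exists (fun j => |a j|) i
    rw [hj]; exact abs_nonneg _
  have hBnn : ∀ i : Fin 3, 0 ≤ sortDesc (fun j => |b j|) i := by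
    intro i
    obtain ⟨j, hj⟩ := sortDesc_exists (fun j => |b j|) i
    rw [hj]; exact abs_nonneg _
  have hB0 : 3 * Real.pi / 2 ≤ sortDesc (fun j => |b j|) 0 :=
    le_trans hbig (le_sortDesc_zero (fun j => |b j|) i0)
  have hB12 : sortDesc (fun j => |b j|) 2 ≤ sortDesc (fun j => |b j|) 1 :=
    sortDesc_anti (fun j => |b j|) (by decide : (1 : Fin 3) ≤ 2)
  -- bound on signed terms
  have hsa : |Real.sign (a 0 * a 1 * a 2) * sortDesc (fun j => |a j|) 2|
      ≤ sortDesc (fun j => |a j|) 2 := by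
    rw [abs_mul, abs_of_nonneg (hAnn 2)]
    nlinarith [abs_sign_le_one (a 0 * a 1 * a 2), hAnn 2]
  have hsb : |Real.sign (b 0 * b 1 * b 2) * sortDesc (fun j => |b j|) 2|
      ≤ sortDesc (fun j => |b j|) 2 := by
    rw [abs_mul, abs_of_nonneg (hBnn 2)]
    nlinarith [abs_sign_le_one (b 0 * b 1 * b 2), hBnn 2]
  rw [abs_le] at hsa hsb
  refine ⟨?_, ?_, ?_⟩ <;>
  · simp only [sOrder, if_pos, if_neg (by decide : (0 : Fin 3) ≠ 2),
      if_neg (by decide : (1 : Fin 3) ≠ 2), reduceIte, hb]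
    nlinarith [hAle 0, hAle 1, hAle 2, hAnn 2, hB0, hB12, hsa.1, hsa.2, hsb.1, hsb.2, hBnn 2]
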